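/- If G is dynamically ℓ-minimal in a hereditary graph class F and ℓ ≥ 5, then every edge of G is incident with at least one vertex of degree at least ℓ. -/

import Mathlib

open Finset

open scoped Classical in
noncomputable def deg {V : Type*} [Fintype V] (G : SimpleGraph V) (v : V) : ℕ :=
  (Finset.univ.filter (fun u => G.Adj v u)).card

def IsProper {V : Type*} (G : SimpleGraph V) (c : V → ℕ) : Prop :=
  ∀ u v, G.Adj u v → c u ≠ c v

def IsDynamic {V : Type*} [Fintype V] (G : SimpleGraph V) (c : V → ℕ) : Prop :=
  IsProper G c ∧ ∀ v, 2 ≤ deg G v → ∃ a b, G.Adj v a ∧ G.Adj v b ∧ c a ≠ c b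

noncomputable def chrom {V : Type*} (G : SimpleGraph V) : ℕ :=
  sInf {n | ∃ c : V → ℕ, (∀ v, c v < n) ∧ IsProper G c}

noncomputable def dynChrom {V : Type*} [Fintype V] (G : SimpleGraph V) : ℕ :=
  sInf {n | ∃ c : V → ℕ, (∀ v, c v < n) ∧ IsDynamic G c}

def subdiv {V : Type*} (G : SimpleGraph V) : SimpleGraph (V ⊕ G.edgeSet) where
  Adj x y :=
    match x, y with
    | Sum.inl u, Sum.inr e => u ∈ (e : Sym2 V)
    | Sum.inr e, Sum.inl u => u ∈ (e : Sym2 V)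
    | _, _ => False
  symm := ⟨by rintro (u | e) (v | f) h <;> first | exact h | exact h.elim⟩
  loopless := ⟨by rintro (u | e) h <;> exact h⟩

noncomputable instance {V : Type*} [Fintype V] (G : SimpleGraph V) : Fintype G.edgeSet :=
  Fintype.ofFinite _

def Choosable {V : Type*} (G : SimpleGraph V) (ℓ : ℕ) : Prop :=
  ∀ L : V → Finset ℕ, (∀ v, (L v).card = ℓ) →
    ∃ c : V → ℕ, (∀ v, c v ∈ L v) ∧ IsProper G c

def DynChoosable {V : Type*} [Fintype V] (G : SimpleGraph V) (ℓ : ℕ) : Prop :=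
  ∀ L : V → Finset ℕ, (∀ v, (L v).card = ℓ) →
    ∃ c : V → ℕ, (∀ v, c v ∈ L v) ∧ IsDynamic G c

noncomputable def listChrom {V : Type*} (G : SimpleGraph V) : ℕ :=
  sInf {ℓ | Choosable G ℓ}

noncomputable def dynListChrom {V : Type*} [Fintype V] (G : SimpleGraph V) : ℕ :=
  sInf {ℓ | DynChoosable G ℓ}

open scoped Classical in
noncomputable def nedges {n : ℕ} (G : SimpleGraph (Fin n)) : ℕ :=
  (Finset.univ.filter (fun e : Sym2 (Fin n) => e ∈ G.edgeSet)).card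

noncomputable def gsize {n : ℕ} (G : SimpleGraph (Fin n)) : ℕ := n + nedges G

/-- `F` is hereditary: it is closed under taking subgraphs (up to isomorphism). -/
def Hereditary (F : ∀ n : ℕ, SimpleGraph (Fin n) → Prop) : Prop :=
  ∀ (n m : ℕ) (G : SimpleGraph (Fin n)) (H : SimpleGraph (Fin m)),
    F n G → (∃ f : Fin m ↪ Fin n, ∀ u v, H.Adj u v → G.Adj (f u) (f v)) → F m H

/-- `G` is dynamically `ℓ`-minimal in the class `F`. -/
def DynMinimal (F : ∀ n : ℕ, SimpleGraph (Fin n) → Prop) (ℓ : ℕ)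
    {n : ℕ} (G : SimpleGraph (Fin n)) : Prop :=
  F n G ∧ ¬ DynChoosable G ℓ ∧
    ∀ (m : ℕ) (H : SimpleGraph (Fin m)), F m H → gsize H < gsize G → DynChoosable H ℓ

open scoped Classical

noncomputable def pickN (s : Finset ℕ) : ℕ := WithTop.untopD 0 s.min

lemma pickN_mem {s : Finset ℕ} (h : s.Nonempty) : pickN s ∈ s := by
  unfold pickN
  obtain ⟨a, ha⟩ := Finset.min_of_nonempty h
  rw [ha]
  exact Finset.mem_of_min ha

lemma pick_diff {L S : Finset ℕ} (h : S.card < L.card) :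
    pickN (L \ S) ∈ L ∧ pickN (L \ S) ∉ S := by
  have hne : (L \ S).Nonempty := by
    rw [← Finset.card_pos]
    have := Finset.le_card_sdiff S L
    omega
  have := pickN_mem hne
  rw [Finset.mem_sdiff] at this
  exact this

noncomputable def monoOf (s : Finset ℕ) : Finset ℕ := if s.card ≤ 1 then s else ∅

lemma monoOf_card (s : Finset ℕ) : (monoOf s).card ≤ 1 := by
  unfold monoOf; split
  · assumption
  · simp

lemma two_of_image {V : Type*} {s : Finset V} {f : V → ℕ} (h : 2 ≤ (s.image f).card) :
    ∃ a ∈ s, ∃ b ∈ s, f a ≠ f b := by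
  obtain ⟨u, hu, v, hv, huv⟩ := Finset.one_lt_card.mp h
  obtain ⟨a, ha, rfl⟩ := Finset.mem_image.mp hu
  obtain ⟨b, hb, rfl⟩ := Finset.mem_image.mp hv
  exact ⟨a, ha, b, hb, huv⟩

lemma mono_helper {V : Type*} {s : Finset V} {f : V → ℕ} {ω : ℕ}
    (h : ω ∉ monoOf (s.image f)) (hne : s.Nonempty) :
    (∃ a ∈ s, ∃ b ∈ s, f a ≠ f b) ∨ (∃ a ∈ s, f a ≠ ω) := by
  by_cases h2 : 2 ≤ (s.image f).card
  · exact Or.inl (two_of_image h2)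
  · right
    obtain ⟨a, ha⟩ := hne
    refine ⟨a, ha, fun hc => h ?_⟩
    unfold monoOf
    rw [if_pos (by omega)]
    rw [← hc]
    exact Finset.mem_image_of_mem f ha

def avoidG {V : Type*} (G : SimpleGraph V) (S : Finset V) : SimpleGraph V where
  Adj a b := G.Adj a b ∧ a ∉ S ∧ b ∉ S
  symm := ⟨by intro a b ⟨h1, h2, h3⟩; exact ⟨h1.symm, h3, h2⟩⟩
  loopless := ⟨fun a h => G.irrefl h.1⟩

noncomputable def seqC (L : ℕ → Finset ℕ) (A : ℕ → (ℕ → ℕ) → Finset ℕ) : ℕ → ℕ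
  | k => pickN (L k \ A k (fun j => if _h : j < k then seqC L A j else 0))

lemma seqC_eq (L : ℕ → Finset ℕ) (A : ℕ → (ℕ → ℕ) → Finset ℕ) (k : ℕ) :
    seqC L A k = pickN (L k \ A k (fun j => if _h : j < k then seqC L A j else 0)) := by
  rw [seqC]

noncomputable def nbr {V : Type*} [Fintype V] (G : SimpleGraph V) (v : V) : Finset V :=
  Finset.univ.filter (fun u => G.Adj v u)

lemma mem_nbr {V : Type*} [Fintype V] (G : SimpleGraph V) (v u : V) :
    u ∈ nbr G v ↔ G.Adj v u := by simp [nbr]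

lemma deg_eq_nbr {V : Type*} [Fintype V] (G : SimpleGraph V) (v : V) :
    deg G v = (nbr G v).card := rfl

lemma avoidG_adj {V : Type*} (G : SimpleGraph V) (S : Finset V) (a b : V) :
    (avoidG G S).Adj a b ↔ G.Adj a b ∧ a ∉ S ∧ b ∉ S := Iff.rfl

lemma nbr_avoid {V : Type*} [Fintype V] (G : SimpleGraph V) (S : Finset V) (v : V)
    (hv : v ∉ S) : nbr (avoidG G S) v = nbr G v \ S := by
  ext u
  simp [nbr, avoidG_adj, hv, Finset.mem_sdiff]

lemma deg_avoid {V : Type*} [Fintype V] (G : SimpleGraph V) (S : Finset V) (v : V)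
    (hv : v ∉ S) : deg (avoidG G S) v = (nbr G v \ S).card := by
  rw [deg_eq_nbr, nbr_avoid _ _ _ hv]

lemma nedges_lt {n : ℕ} (G : SimpleGraph (Fin n)) (S : Finset (Fin n)) {x y : Fin n}
    (hxy : G.Adj x y) (hx : x ∈ S) : nedges (avoidG G S) < nedges G := by
  apply Finset.card_lt_card
  constructor
  · intro e he
    induction e with
    | _ a b =>
      rw [Finset.mem_filter] at he ⊢
      exact ⟨he.1, he.2.1⟩
  · intro hsub
    have : s(x, y) ∈ Finset.univ.filter (fun e : Sym2 (Fin n) => e ∈ (avoidG G S).edgeSet) := by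
      apply hsub
      rw [Finset.mem_filter]
      exact ⟨Finset.mem_univ _, hxy⟩
    rw [Finset.mem_filter, SimpleGraph.mem_edgeSet] at this
    exact this.2.2.1 hx

noncomputable def FpD {n : ℕ} (x : Fin n) (T : Finset (Fin n)) (α : ℕ) (c' : Fin n → ℕ)
    (prev : ℕ → ℕ) (u : Fin n) : ℕ :=
  if u = x then α else if u ∈ T then prev u.val else c' u

noncomputable def AseqD {n : ℕ} (G : SimpleGraph (Fin n)) (x : Fin n) (T : Finset (Fin n))
    (zf : Fin n → Fin n) (α : ℕ) (c' : Fin n → ℕ) : ℕ → (ℕ → ℕ) → Finset ℕ :=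
  fun k prev =>
    if h : k < n then
      {α} ∪ {FpD x T α c' prev (zf ⟨k, h⟩)} ∪
        monoOf (((nbr G (zf ⟨k, h⟩)).erase ⟨k, h⟩).image (FpD x T α c' prev)) ∪
        monoOf (((nbr G x).erase ⟨k, h⟩).image (FpD x T α c' prev))
    else ∅

noncomputable def LseqD {n : ℕ} (L : Fin n → Finset ℕ) : ℕ → Finset ℕ :=
  fun k => if h : k < n then L ⟨k, h⟩ else ∅

lemma AseqD_card {n : ℕ} (G : SimpleGraph (Fin n)) (x : Fin n) (T : Finset (Fin n))
    (zf : Fin n → Fin n) (α : ℕ) (c' : Fin n → ℕ) (k : ℕ) (prev : ℕ → ℕ) :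
    (AseqD G x T zf α c' k prev).card ≤ 4 := by
  unfold AseqD
  split
  · have h1 := Finset.card_union_le
      (({α} : Finset ℕ) ∪ {FpD x T α c' prev (zf ⟨k, by assumption⟩)} ∪
        monoOf (((nbr G (zf ⟨k, by assumption⟩)).erase ⟨k, by assumption⟩).image
          (FpD x T α c' prev)))
      (monoOf (((nbr G x).erase ⟨k, by assumption⟩).image (FpD x T α c' prev)))
    have h2 := Finset.card_union_le
      (({α} : Finset ℕ) ∪ {FpD x T α c' prev (zf ⟨k, by assumption⟩)})
      (monoOf (((nbr G (zf ⟨k, by assumption⟩)).erase ⟨k, by assumption⟩).image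
        (FpD x T α c' prev)))
    have h3 := Finset.card_union_le ({α} : Finset ℕ)
      ({FpD x T α c' prev (zf ⟨k, by assumption⟩)} : Finset ℕ)
    have h4 := monoOf_card (((nbr G (zf ⟨k, by assumption⟩)).erase ⟨k, by assumption⟩).image
      (FpD x T α c' prev))
    have h5 := monoOf_card (((nbr G x).erase ⟨k, by assumption⟩).image (FpD x T α c' prev))
    have h6 : ({α} : Finset ℕ).card = 1 := Finset.card_singleton α
    have h7 : ({FpD x T α c' prev (zf ⟨k, by assumption⟩)} : Finset ℕ).card = 1 :=
      Finset.card_singleton _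
    omega
  · simp

lemma caseA {n ℓ : ℕ} (G : SimpleGraph (Fin n)) (hl : 5 ≤ ℓ) {x w₀ : Fin n}
    (hxw : G.Adj x w₀) (hw2 : deg G w₀ = 2) (hdx : deg G x < ℓ)
    (hH : DynChoosable (avoidG G {x}) ℓ) : DynChoosable G ℓ := by
  intro L hL
  obtain ⟨c', hc'mem, hc'prop, hc'dyn⟩ := hH L hL
  have hmemS : ∀ v : Fin n, v ∉ ({x} : Finset (Fin n)) ↔ v ≠ x := by
    intro v; simp
  set T := (nbr G x).filter (fun w => deg G w = 2) with hT
  have hTmem : ∀ w, w ∈ T ↔ (G.Adj x w ∧ deg G w = 2) := by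
    intro w; rw [hT, Finset.mem_filter, mem_nbr]
  have hxT : x ∉ T := by
    rw [hTmem]; rintro ⟨h, -⟩; exact G.irrefl h
  have hTsub : T ⊆ nbr G x := Finset.filter_subset _ _
  set zf : Fin n → Fin n := fun w => WithTop.untopD x (((nbr G w).erase x).min) with hzf
  -- basic facts about zf on T
  have hz : ∀ w ∈ T, G.Adj w (zf w) ∧ zf w ≠ x ∧ zf w ≠ w ∧
      (∀ u, G.Adj w u → u = x ∨ u = zf w) := by
    intro w hw
    rw [hTmem] at hw
    have hxnw : x ∈ nbr G w := (mem_nbr G w x).2 hw.1.symm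
    have hcard : ((nbr G w).erase x).card = 1 := by
      rw [Finset.card_erase_of_mem hxnw]
      rw [deg_eq_nbr] at hw
      omega
    obtain ⟨u, hu⟩ := Finset.card_eq_one.1 hcard
    have hzw : zf w = u := by
      rw [hzf]
      simp only [hu]
      rw [Finset.min_singleton]
      rfl
    have hun : nbr G w = {x, u} := by
      rw [← Finset.insert_erase hxnw, hu]
    have huu : u ∈ (nbr G w).erase x := by rw [hu]; exact Finset.mem_singleton_self u
    have hux : u ≠ x := (Finset.mem_erase.1 huu).1
    have huadj : G.Adj w u := (mem_nbr G w u).1 (Finset.mem_of_mem_erase huu)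
    refine ⟨hzw ▸ huadj, hzw ▸ hux, hzw ▸ (G.ne_of_adj huadj).symm, ?_⟩
    intro v hv
    have : v ∈ nbr G w := (mem_nbr G w v).2 hv
    rw [hun] at this
    rcases Finset.mem_insert.1 this with h | h
    · exact Or.inl h
    · exact Or.inr (hzw ▸ Finset.mem_singleton.1 h)
  -- choose α
  set AvA := ((nbr G x \ T) ∪ T.image zf).image c' with hAvA
  have hAvAcard : AvA.card < ℓ := by
    have h1 : AvA.card ≤ ((nbr G x \ T) ∪ T.image zf).card := Finset.card_image_le
    have h2 := Finset.card_union_le (nbr G x \ T) (T.image zf)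
    have h3 : (nbr G x \ T).card = (nbr G x).card - T.card := Finset.card_sdiff_of_subset hTsub
    have h4 : (T.image zf).card ≤ T.card := Finset.card_image_le
    have h5 : T.card ≤ (nbr G x).card := Finset.card_le_card hTsub
    rw [deg_eq_nbr] at hdx
    omega
  have hαp := pick_diff (L := L x) (S := AvA) (by rw [hL x]; exact hAvAcard)
  set α := pickN (L x \ AvA) with hαdef
  have hαL : α ∈ L x := hαp.1
  have hαU : ∀ u, G.Adj x u → u ∉ T → α ≠ c' u := by
    intro u hu huT h
    exact hαp.2 (h ▸ Finset.mem_image_of_mem c' (Finset.mem_union_left _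
      (Finset.mem_sdiff.2 ⟨(mem_nbr G x u).2 hu, huT⟩)))
  have hαz : ∀ w ∈ T, α ≠ c' (zf w) := by
    intro w hw h
    exact hαp.2 (h ▸ Finset.mem_image_of_mem c' (Finset.mem_union_right _
      (Finset.mem_image_of_mem zf hw)))
  -- sequential choice
  set ω : Fin n → ℕ := fun v => seqC (LseqD L) (AseqD G x T zf α c') v.val with hω
  set Pw : Fin n → ℕ → ℕ :=
    fun w j => if _h : j < w.val then seqC (LseqD L) (AseqD G x T zf α c') j else 0 with hPw
  set FF : Fin n → Fin n → ℕ := fun w => FpD x T α c' (Pw w) with hFF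
  set c : Fin n → ℕ := fun v => if v = x then α else if v ∈ T then ω v else c' v with hc
  have hcx : c x = α := by simp [hc]
  have hcT : ∀ w, w ∈ T → c w = ω w := by
    intro w hw
    have : w ≠ x := fun h => hxT (h ▸ hw)
    simp [hc, this, hw]
  have hcother : ∀ v, v ≠ x → v ∉ T → c v = c' v := by
    intro v h1 h2; simp [hc, h1, h2]
  have hωspec : ∀ w : Fin n, ω w ∈ L w ∧ ω w ∉ AseqD G x T zf α c' w.val (Pw w) := by
    intro w
    have heq : ω w = pickN (LseqD L w.val \ AseqD G x T zf α c' w.val (Pw w)) :=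
      seqC_eq _ _ _
    have hLw : LseqD L w.val = L w := by
      rw [LseqD]
      simp [w.isLt]
    rw [heq, hLw]
    exact pick_diff (by
      have := AseqD_card G x T zf α c' w.val (Pw w)
      rw [hL w]; omega)
  have hAseqw : ∀ w : Fin n, AseqD G x T zf α c' w.val (Pw w) =
      {α} ∪ {FF w (zf w)} ∪ monoOf (((nbr G (zf w)).erase w).image (FF w)) ∪
        monoOf (((nbr G x).erase w).image (FF w)) := by
    intro w
    rw [AseqD]
    simp [w.isLt, hFF]
  have hω1 : ∀ w : Fin n, ω w ≠ α := by
    intro w h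
    apply (hωspec w).2
    rw [hAseqw w]
    exact Finset.mem_union_left _ (Finset.mem_union_left _ (Finset.mem_union_left _
      (h ▸ Finset.mem_singleton_self α)))
  have hω2 : ∀ w : Fin n, ω w ≠ FF w (zf w) := by
    intro w h
    apply (hωspec w).2
    rw [hAseqw w]
    exact Finset.mem_union_left _ (Finset.mem_union_left _ (Finset.mem_union_right _
      (h ▸ Finset.mem_singleton_self _)))
  have hω3 : ∀ w : Fin n, ω w ∉ monoOf (((nbr G (zf w)).erase w).image (FF w)) := by
    intro w h
    apply (hωspec w).2
    rw [hAseqw w]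
    exact Finset.mem_union_left _ (Finset.mem_union_right _ h)
  have hω4 : ∀ w : Fin n, ω w ∉ monoOf (((nbr G x).erase w).image (FF w)) := by
    intro w h
    apply (hωspec w).2
    rw [hAseqw w]
    exact Finset.mem_union_right _ h
  -- FF agrees with c
  have hFFc : ∀ w u : Fin n, (u ∉ T ∨ u < w) → FF w u = c u := by
    intro w u hu
    by_cases hux : u = x
    · subst hux
      rw [hcx, hFF]
      simp [FpD]
    by_cases huT : u ∈ T
    · have hlt : u < w := by
        rcases hu with h | h
        · exact absurd huT h
        · exact h
      rw [hcT u huT, hFF]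
      simp only [FpD, if_neg hux, if_pos huT, hPw]
      rw [dif_pos (by exact hlt)]
    · rw [hcother u hux huT, hFF]
      simp [FpD, hux, huT]
  have hprop' : ∀ a b, G.Adj a b → a ≠ x → b ≠ x → c' a ≠ c' b := by
    intro a b hab ha hb
    exact hc'prop a b ⟨hab, (hmemS a).2 ha, (hmemS b).2 hb⟩
  have hTedge : ∀ u v, u ∈ T → G.Adj u v → v ≠ x → c u ≠ c v := by
    intro u v huT huv hvx
    have hvz : v = zf u := ((hz u huT).2.2.2 v huv).resolve_left hvx
    rw [hvz]
    rw [hcT u huT]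
    by_cases hzT : zf u ∈ T
    · rcases lt_trichotomy u (zf u) with hlt | heq | hgt
      · have hzz : zf (zf u) = u := by
          have h0 := (hz (zf u) hzT).2.2.2 u (hz u huT).1.symm
          rcases h0 with h | h
          · exact absurd h (fun hh => hxT (hh ▸ huT))
          · exact h.symm
        have h2 := hω2 (zf u)
        rw [hzz] at h2
        rw [hFFc (zf u) u (Or.inr hlt)] at h2
        rw [hcT u huT] at h2
        rw [hcT (zf u) hzT]
        exact Ne.symm h2
      · exact absurd heq.symm (hz u huT).2.2.1
      · have h2 := hω2 u
        rw [hFFc u (zf u) (Or.inr hgt)] at h2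
        exact h2
    · have h2 := hω2 u
      rw [hFFc u (zf u) (Or.inl hzT)] at h2
      exact h2
  have hnotZ : ∀ v a, v ≠ x → ¬ (∃ w ∈ T, zf w = v) → G.Adj v a → a ∉ T := by
    intro v a hvx hvZ hva haT
    have h0 := (hz a haT).2.2.2 v hva.symm
    rcases h0 with h | h
    · exact hvx h
    · exact hvZ ⟨a, haT, h.symm⟩
  refine ⟨c, ?_, ?_, ?_⟩
  · intro v
    by_cases h1 : v = x
    · rw [h1, hcx]; exact hαL
    by_cases h2 : v ∈ T
    · rw [hcT v h2]; exact (hωspec v).1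
    · rw [hcother v h1 h2]; exact hc'mem v
  · intro u v huv
    by_cases hux : u = x
    · rw [hux] at huv
      rw [hux, hcx]
      have hvx : v ≠ x := (G.ne_of_adj huv).symm
      by_cases hvT : v ∈ T
      · rw [hcT v hvT]
        exact Ne.symm (hω1 v)
      · rw [hcother v hvx hvT]
        exact hαU v huv hvT
    by_cases huT : u ∈ T
    · by_cases hvx : v = x
      · rw [hvx, hcx, hcT u huT]
        exact hω1 u
      · exact hTedge u v huT huv hvx
    · by_cases hvx : v = x
      · rw [hvx] at huv
        rw [hvx, hcx, hcother u hux huT]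
        exact Ne.symm (hαU u huv.symm huT)
      by_cases hvT : v ∈ T
      · exact Ne.symm (hTedge v u hvT huv.symm hux)
      · rw [hcother u hux huT, hcother v hvx hvT]
        exact hprop' u v huv hux hvx
  · intro v hdeg
    by_cases hvx : v = x
    · rw [hvx] at hdeg ⊢
      have hTne : T.Nonempty := ⟨w₀, (hTmem w₀).2 ⟨hxw, hw2⟩⟩
      set w1 := T.max' hTne with hw1def
      have hw1T : w1 ∈ T := T.max'_mem hTne
      have hErne : ((nbr G x).erase w1).Nonempty := by
        rw [← Finset.card_pos, Finset.card_erase_of_mem (hTsub hw1T)]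
        rw [deg_eq_nbr] at hdeg
        omega
      have himg : ((nbr G x).erase w1).image (FF w1) = ((nbr G x).erase w1).image c := by
        apply Finset.image_congr
        intro u hu
        have hu' := Finset.mem_erase.1 (Finset.mem_coe.1 hu)
        apply hFFc
        by_cases huT : u ∈ T
        · exact Or.inr (lt_of_le_of_ne (T.le_max' u huT) hu'.1)
        · exact Or.inl huT
      have h4 := hω4 w1
      rw [himg] at h4
      rcases mono_helper h4 hErne with ⟨a, ha, b, hb, hab⟩ | ⟨a, ha, hane⟩
      · have ha' := Finset.mem_erase.1 ha
        have hb' := Finset.mem_erase.1 hb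
        exact ⟨a, b, (mem_nbr G x a).1 ha'.2, (mem_nbr G x b).1 hb'.2, hab⟩
      · have ha' := Finset.mem_erase.1 ha
        refine ⟨a, w1, (mem_nbr G x a).1 ha'.2, (mem_nbr G x w1).1 (hTsub hw1T), ?_⟩
        rw [hcT w1 hw1T]
        exact hane
    by_cases hvT : v ∈ T
    · have hzv := hz v hvT
      refine ⟨x, zf v, ((hTmem v).1 hvT).1.symm, hzv.1, ?_⟩
      rw [hcx]
      by_cases hzT : zf v ∈ T
      · rw [hcT _ hzT]
        exact Ne.symm (hω1 (zf v))
      · rw [hcother _ hzv.2.1 hzT]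
        exact hαz v hvT
    by_cases hvadj : G.Adj x v
    · by_cases hvZ : ∃ w ∈ T, zf w = v
      · obtain ⟨w, hwT, hwz⟩ := hvZ
        refine ⟨x, w, hvadj.symm, (hwz ▸ (hz w hwT).1).symm, ?_⟩
        rw [hcx, hcT w hwT]
        exact Ne.symm (hω1 w)
      · have hdeg3 : 3 ≤ deg G v := by
          have h2 : deg G v ≠ 2 := fun h => hvT ((hTmem v).2 ⟨hvadj, h⟩)
          omega
        have hsub : (nbr G v).erase x ⊆ nbr (avoidG G {x}) v := by
          intro u hu
          have hu' := Finset.mem_erase.1 hu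
          rw [mem_nbr, avoidG_adj]
          exact ⟨(mem_nbr G v u).1 hu'.2, (hmemS v).2 hvx, (hmemS u).2 hu'.1⟩
        have hdH : 2 ≤ deg (avoidG G {x}) v := by
          rw [deg_eq_nbr]
          have h1 := Finset.card_le_card hsub
          rw [Finset.card_erase_of_mem ((mem_nbr G v x).2 hvadj.symm)] at h1
          rw [deg_eq_nbr] at hdeg3
          omega
        obtain ⟨a, b, ha, hb, hab⟩ := hc'dyn v hdH
        rw [avoidG_adj] at ha hb
        refine ⟨a, b, ha.1, hb.1, ?_⟩
        rw [hcother a ((hmemS a).1 ha.2.2) (hnotZ v a hvx hvZ ha.1),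
          hcother b ((hmemS b).1 hb.2.2) (hnotZ v b hvx hvZ hb.1)]
        exact hab
    · by_cases hvZ : ∃ w ∈ T, zf w = v
      · have hTVne : (T.filter (fun w => zf w = v)).Nonempty := by
          obtain ⟨w, hw1, hw2'⟩ := hvZ
          exact ⟨w, Finset.mem_filter.2 ⟨hw1, hw2'⟩⟩
        set TV := T.filter (fun w => zf w = v) with hTVdef
        set w1 := TV.max' hTVne with hw1def
        have hw1TV : w1 ∈ TV := TV.max'_mem hTVne
        have hw1T : w1 ∈ T := (Finset.mem_filter.1 hw1TV).1
        have hw1z : zf w1 = v := (Finset.mem_filter.1 hw1TV).2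
        have hADJ : G.Adj v w1 := (hw1z ▸ (hz w1 hw1T).1).symm
        have hErne : ((nbr G v).erase w1).Nonempty := by
          rw [← Finset.card_pos, Finset.card_erase_of_mem ((mem_nbr G v w1).2 hADJ)]
          rw [deg_eq_nbr] at hdeg
          omega
        have himg : ((nbr G v).erase w1).image (FF w1) = ((nbr G v).erase w1).image c := by
          apply Finset.image_congr
          intro u hu
          have hu' := Finset.mem_erase.1 (Finset.mem_coe.1 hu)
          have huadj : G.Adj v u := (mem_nbr G v u).1 hu'.2
          apply hFFc
          by_cases huT : u ∈ T
          · have h0 := (hz u huT).2.2.2 v huadj.symm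
            have hzu : zf u = v := (h0.resolve_left (fun h => hvx h)).symm
            exact Or.inr (lt_of_le_of_ne
              (TV.le_max' u (Finset.mem_filter.2 ⟨huT, hzu⟩)) hu'.1)
          · exact Or.inl huT
        have h3 := hω3 w1
        rw [hw1z, himg] at h3
        rcases mono_helper h3 hErne with ⟨a, ha, b, hb, hab⟩ | ⟨a, ha, hane⟩
        · have ha' := Finset.mem_erase.1 ha
          have hb' := Finset.mem_erase.1 hb
          exact ⟨a, b, (mem_nbr G v a).1 ha'.2, (mem_nbr G v b).1 hb'.2, hab⟩
        · have ha' := Finset.mem_erase.1 ha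
          refine ⟨a, w1, (mem_nbr G v a).1 ha'.2, hADJ, ?_⟩
          rw [hcT w1 hw1T]
          exact hane
      · have hsub : nbr G v ⊆ nbr (avoidG G {x}) v := by
          intro u hu
          have huadj := (mem_nbr G v u).1 hu
          have hux' : u ≠ x := fun h => hvadj (h ▸ huadj).symm
          rw [mem_nbr, avoidG_adj]
          exact ⟨huadj, (hmemS v).2 hvx, (hmemS u).2 hux'⟩
        have hdH : 2 ≤ deg (avoidG G {x}) v := by
          rw [deg_eq_nbr]
          have h1 := Finset.card_le_card hsub
          rw [deg_eq_nbr] at hdeg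
          omega
        obtain ⟨a, b, ha, hb, hab⟩ := hc'dyn v hdH
        rw [avoidG_adj] at ha hb
        refine ⟨a, b, ha.1, hb.1, ?_⟩
        rw [hcother a ((hmemS a).1 ha.2.2) (hnotZ v a hvx hvZ ha.1),
          hcother b ((hmemS b).1 hb.2.2) (hnotZ v b hvx hvZ hb.1)]
        exact hab

lemma caseB {n ℓ : ℕ} (G : SimpleGraph (Fin n)) (hl : 5 ≤ ℓ) {x y : Fin n}
    (hxy : G.Adj x y) (hdx : deg G x < ℓ) (hdy : deg G y < ℓ)
    (hx2 : ∀ w, G.Adj x w → deg G w ≠ 2) (hy2 : ∀ w, G.Adj y w → deg G w ≠ 2)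
    (hH : DynChoosable (avoidG G {x, y}) ℓ) : DynChoosable G ℓ := by
  intro L hL
  obtain ⟨c', hc'mem, hc'prop, hc'dyn⟩ := hH L hL
  have hxny : x ≠ y := G.ne_of_adj hxy
  set S : Finset (Fin n) := {x, y} with hS
  have hmemS : ∀ v : Fin n, v ∉ S ↔ (v ≠ x ∧ v ≠ y) := by
    intro v; simp [hS]
  set A := ((nbr G x).erase y).image c' with hA
  set B := ((nbr G y).erase x).image c' with hB
  have hyx : y ∈ nbr G x := (mem_nbr G x y).2 hxy
  have hxyn : x ∈ nbr G y := (mem_nbr G y x).2 hxy.symm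
  have hAcard : A.card + 2 ≤ ℓ := by
    have h1 : A.card ≤ ((nbr G x).erase y).card := Finset.card_image_le
    have h2 : ((nbr G x).erase y).card = (nbr G x).card - 1 :=
      Finset.card_erase_of_mem hyx
    have h3 : 1 ≤ (nbr G x).card := Finset.card_pos.2 ⟨y, hyx⟩
    rw [deg_eq_nbr] at hdx
    omega
  have hBcard : B.card + 2 ≤ ℓ := by
    have h1 : B.card ≤ ((nbr G y).erase x).card := Finset.card_image_le
    have h2 : ((nbr G y).erase x).card = (nbr G y).card - 1 :=
      Finset.card_erase_of_mem hxyn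
    have h3 : 1 ≤ (nbr G y).card := Finset.card_pos.2 ⟨x, hxyn⟩
    rw [deg_eq_nbr] at hdy
    omega
  obtain ⟨α, β, hαL, hβL, hαA, hβB, hαβ, hdynx, hdyny⟩ :
      ∃ α β : ℕ, α ∈ L x ∧ β ∈ L y ∧ α ∉ A ∧ β ∉ B ∧ α ≠ β ∧
        (2 ≤ A.card ∨ β ∉ A) ∧ α ∉ monoOf B := by
    by_cases h2 : 2 ≤ A.card
    · have hα := pick_diff (L := L x) (S := A ∪ monoOf B) (by
        have h4 := Finset.card_union_le A (monoOf B)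
        have h5 := monoOf_card B
        rw [hL x]; omega)
      set α := pickN (L x \ (A ∪ monoOf B)) with hαdef
      have hβ := pick_diff (L := L y) (S := B ∪ {α}) (by
        have h4 := Finset.card_union_le B ({α} : Finset ℕ)
        have h5 : ({α} : Finset ℕ).card = 1 := Finset.card_singleton α
        rw [hL y]; omega)
      set β := pickN (L y \ (B ∪ {α})) with hβdef
      refine ⟨α, β, hα.1, hβ.1, fun h => hα.2 (Finset.mem_union_left _ h),
        fun h => hβ.2 (Finset.mem_union_left _ h), ?_, Or.inl h2,
        fun h => hα.2 (Finset.mem_union_right _ h)⟩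
      intro h
      exact hβ.2 (Finset.mem_union_right _ (Finset.mem_singleton.2 h.symm))
    · have h2' : A.card ≤ 1 := by omega
      have hβ := pick_diff (L := L y) (S := B ∪ A) (by
        have h4 := Finset.card_union_le B A
        rw [hL y]; omega)
      set β := pickN (L y \ (B ∪ A)) with hβdef
      have hα := pick_diff (L := L x) (S := (A ∪ monoOf B) ∪ {β}) (by
        have h4 := Finset.card_union_le (A ∪ monoOf B) ({β} : Finset ℕ)
        have h5 := Finset.card_union_le A (monoOf B)
        have h6 := monoOf_card B
        have h7 : ({β} : Finset ℕ).card = 1 := Finset.card_singleton β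
        rw [hL x]; omega)
      set α := pickN (L x \ ((A ∪ monoOf B) ∪ {β})) with hαdef
      refine ⟨α, β, hα.1, hβ.1,
        fun h => hα.2 (Finset.mem_union_left _ (Finset.mem_union_left _ h)),
        fun h => hβ.2 (Finset.mem_union_left _ h), ?_,
        Or.inr (fun h => hβ.2 (Finset.mem_union_right _ h)),
        fun h => hα.2 (Finset.mem_union_left _ (Finset.mem_union_right _ h))⟩
      intro h
      exact hα.2 (Finset.mem_union_right _ (Finset.mem_singleton.2 h))
  classical
  set c : Fin n → ℕ := fun v => if v = x then α else if v = y then β else c' v with hc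
  have hcx : c x = α := by simp [hc]
  have hcy : c y = β := by simp [hc, hxny.symm]
  have hcother : ∀ v, v ≠ x → v ≠ y → c v = c' v := by
    intro v h1 h2; simp [hc, h1, h2]
  have hprop' : ∀ a b, G.Adj a b → a ≠ x → a ≠ y → b ≠ x → b ≠ y → c' a ≠ c' b := by
    intro a b hab ha1 ha2 hb1 hb2
    exact hc'prop a b ⟨hab, (hmemS a).2 ⟨ha1, ha2⟩, (hmemS b).2 ⟨hb1, hb2⟩⟩
  have hAval : ∀ w, G.Adj x w → w ≠ y → α ≠ c' w := by
    intro w hw hwy h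
    exact hαA (h ▸ Finset.mem_image_of_mem c'
      (Finset.mem_erase.2 ⟨hwy, (mem_nbr G x w).2 hw⟩))
  have hBval : ∀ w, G.Adj y w → w ≠ x → β ≠ c' w := by
    intro w hw hwx h
    exact hβB (h ▸ Finset.mem_image_of_mem c'
      (Finset.mem_erase.2 ⟨hwx, (mem_nbr G y w).2 hw⟩))
  refine ⟨c, ?_, ?_, ?_⟩
  · intro v
    by_cases h1 : v = x
    · subst h1; rw [hcx]; exact hαL
    by_cases h2 : v = y
    · subst h2; rw [hcy]; exact hβL
    · rw [hcother v h1 h2]; exact hc'mem v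
  · intro u v huv
    by_cases hux : u = x
    · subst hux
      by_cases hvy : v = y
      · subst hvy; rw [hcx, hcy]; exact hαβ
      · rw [hcx, hcother v (G.ne_of_adj huv).symm hvy]
        exact hAval v huv hvy
    by_cases huy : u = y
    · subst huy
      by_cases hvx : v = x
      · subst hvx; rw [hcy, hcx]; exact hαβ.symm
      · rw [hcy, hcother v hvx (G.ne_of_adj huv).symm]
        exact hBval v huv hvx
    by_cases hvx : v = x
    · subst hvx
      rw [hcother u hux huy, hcx]
      exact (hAval u huv.symm huy).symm
    by_cases hvy : v = y
    · subst hvy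
      rw [hcother u hux huy, hcy]
      exact (hBval u huv.symm hux).symm
    · rw [hcother u hux huy, hcother v hvx hvy]
      exact hprop' u v huv hux huy hvx hvy
  · intro v hdeg
    by_cases hvx : v = x
    · rw [hvx] at hdeg ⊢
      have hAne : ((nbr G x).erase y).Nonempty := by
        rw [← Finset.card_pos, Finset.card_erase_of_mem hyx]
        rw [deg_eq_nbr] at hdeg; omega
      rcases hdynx with h2 | hβA
      · obtain ⟨a, ha, b, hb, hab⟩ := two_of_image h2
        have ha' := Finset.mem_erase.1 ha
        have hb' := Finset.mem_erase.1 hb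
        have haa : G.Adj x a := (mem_nbr G x a).1 ha'.2
        have hba : G.Adj x b := (mem_nbr G x b).1 hb'.2
        refine ⟨a, b, haa, hba, ?_⟩
        rw [hcother a (G.ne_of_adj haa).symm ha'.1,
          hcother b (G.ne_of_adj hba).symm hb'.1]
        exact hab
      · obtain ⟨a, ha⟩ := hAne
        have ha' := Finset.mem_erase.1 ha
        have haa : G.Adj x a := (mem_nbr G x a).1 ha'.2
        refine ⟨y, a, hxy, haa, ?_⟩
        rw [hcy, hcother a (G.ne_of_adj haa).symm ha'.1]
        exact fun h => hβA (h ▸ Finset.mem_image_of_mem c' ha)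
    by_cases hvy : v = y
    · rw [hvy] at hdeg ⊢
      have hBne : ((nbr G y).erase x).Nonempty := by
        rw [← Finset.card_pos, Finset.card_erase_of_mem hxyn]
        rw [deg_eq_nbr] at hdeg; omega
      rcases mono_helper hdyny hBne with ⟨a, ha, b, hb, hab⟩ | ⟨a, ha, hane⟩
      · have ha' := Finset.mem_erase.1 ha
        have hb' := Finset.mem_erase.1 hb
        have haa : G.Adj y a := (mem_nbr G y a).1 ha'.2
        have hba : G.Adj y b := (mem_nbr G y b).1 hb'.2
        refine ⟨a, b, haa, hba, ?_⟩
        rw [hcother a ha'.1 (G.ne_of_adj haa).symm,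
          hcother b hb'.1 (G.ne_of_adj hba).symm]
        exact hab
      · have ha' := Finset.mem_erase.1 ha
        have haa : G.Adj y a := (mem_nbr G y a).1 ha'.2
        refine ⟨x, a, hxy.symm, haa, ?_⟩
        rw [hcx, hcother a ha'.1 (G.ne_of_adj haa).symm]
        exact hane.symm
    · have hvS : v ∉ S := (hmemS v).2 ⟨hvx, hvy⟩
      have hfin : ∀ a b : Fin n, G.Adj v a → G.Adj v b → a ∉ S → b ∉ S →
          c' a ≠ c' b → ∃ a b, G.Adj v a ∧ G.Adj v b ∧ c a ≠ c b := by
        intro a b ha hb haS hbS hab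
        refine ⟨a, b, ha, hb, ?_⟩
        rw [hcother a ((hmemS a).1 haS).1 ((hmemS a).1 haS).2,
          hcother b ((hmemS b).1 hbS).1 ((hmemS b).1 hbS).2]
        exact hab
      by_cases hvax : G.Adj v x
      · by_cases hvay : G.Adj v y
        · exact ⟨x, y, hvax, hvay, by rw [hcx, hcy]; exact hαβ⟩
        · have hd3 : 3 ≤ deg G v := by
            have := hx2 v hvax.symm; omega
          have hsub : (nbr G v).erase x ⊆ nbr (avoidG G S) v := by
            intro u hu
            have hu' := Finset.mem_erase.1 hu
            have hadj : G.Adj v u := (mem_nbr G v u).1 hu'.2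
            have huy : u ≠ y := fun hh => hvay (hh ▸ hadj)
            rw [mem_nbr, avoidG_adj]
            exact ⟨hadj, hvS, (hmemS u).2 ⟨hu'.1, huy⟩⟩
          have hdH : 2 ≤ deg (avoidG G S) v := by
            rw [deg_eq_nbr]
            have h1 := Finset.card_le_card hsub
            rw [Finset.card_erase_of_mem ((mem_nbr G v x).2 hvax)] at h1
            rw [deg_eq_nbr] at hd3; omega
          obtain ⟨a, b, ha, hb, hab⟩ := hc'dyn v hdH
          rw [avoidG_adj] at ha hb
          exact hfin a b ha.1 hb.1 ha.2.2 hb.2.2 hab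
      · by_cases hvay : G.Adj v y
        · have hd3 : 3 ≤ deg G v := by
            have := hy2 v hvay.symm; omega
          have hsub : (nbr G v).erase y ⊆ nbr (avoidG G S) v := by
            intro u hu
            have hu' := Finset.mem_erase.1 hu
            have hadj : G.Adj v u := (mem_nbr G v u).1 hu'.2
            have hux : u ≠ x := fun hh => hvax (hh ▸ hadj)
            rw [mem_nbr, avoidG_adj]
            exact ⟨hadj, hvS, (hmemS u).2 ⟨hux, hu'.1⟩⟩
          have hdH : 2 ≤ deg (avoidG G S) v := by
            rw [deg_eq_nbr]
            have h1 := Finset.card_le_card hsub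
            rw [Finset.card_erase_of_mem ((mem_nbr G v y).2 hvay)] at h1
            rw [deg_eq_nbr] at hd3; omega
          obtain ⟨a, b, ha, hb, hab⟩ := hc'dyn v hdH
          rw [avoidG_adj] at ha hb
          exact hfin a b ha.1 hb.1 ha.2.2 hb.2.2 hab
        · have hsub : nbr G v ⊆ nbr (avoidG G S) v := by
            intro u hu
            have hadj : G.Adj v u := (mem_nbr G v u).1 hu
            have hux : u ≠ x := fun hh => hvax (hh ▸ hadj)
            have huy : u ≠ y := fun hh => hvay (hh ▸ hadj)
            rw [mem_nbr, avoidG_adj]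
            exact ⟨hadj, hvS, (hmemS u).2 ⟨hux, huy⟩⟩
          have hdH : 2 ≤ deg (avoidG G S) v := by
            rw [deg_eq_nbr]
            have h1 := Finset.card_le_card hsub
            rw [deg_eq_nbr] at hdeg; omega
          obtain ⟨a, b, ha, hb, hab⟩ := hc'dyn v hdH
          rw [avoidG_adj] at ha hb
          exact hfin a b ha.1 hb.1 ha.2.2 hb.2.2 hab

theorem dynMinimal_edge_big_endpoint (F : ∀ n : ℕ, SimpleGraph (Fin n) → Prop)
    (hF : Hereditary F) (ℓ : ℕ) (hl : 5 ≤ ℓ) {n : ℕ} (G : SimpleGraph (Fin n))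
    (hG : DynMinimal F ℓ G) :
    ∀ u v, G.Adj u v → ℓ ≤ deg G u ∨ ℓ ≤ deg G v := by
  intro u v huv
  by_contra hcon
  push_neg at hcon
  obtain ⟨hdu, hdv⟩ := hcon
  apply hG.2.1
  have hsub : ∀ (S : Finset (Fin n)) (x y : Fin n), G.Adj x y → x ∈ S →
      DynChoosable (avoidG G S) ℓ := by
    intro S x y hxy hxS
    apply hG.2.2 n (avoidG G S)
    · exact hF n n G (avoidG G S) hG.1 ⟨Function.Embedding.refl _, fun a b h => h.1⟩
    · unfold gsize
      have := nedges_lt G S hxy hxS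
      omega
  by_cases hA : ∃ w, G.Adj u w ∧ deg G w = 2
  · obtain ⟨w, hw1, hw2⟩ := hA
    exact caseA G hl hw1 hw2 hdu (hsub {u} u w hw1 (Finset.mem_singleton_self u))
  by_cases hB : ∃ w, G.Adj v w ∧ deg G w = 2
  · obtain ⟨w, hw1, hw2⟩ := hB
    exact caseA G hl hw1 hw2 hdv (hsub {v} v w hw1 (Finset.mem_singleton_self v))
  · push_neg at hA hB
    exact caseB G hl huv hdu hdv (fun w hw => hA w hw) (fun w hw => hB w hw)
      (hsub {u, v} u v huv (Finset.mem_insert_self u _))
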